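/- Suppose C is the disjoint union of two full subcategories C₀ and C' with no morphisms between them, and there is a full functor C₁ ⥤ C₀ surjective on objects where C₁ is a full subcategory of C'. If C' is quasi-Gröbner, then C is quasi-Gröbner. -/

import Mathlib

open CategoryTheory

universe w₁ w₂

def PropertyF {C : Type*} [Category C] {D : Type*} [Category D] (Φ : C ⥤ D) : Prop :=
  ∀ d : D, ∃ (n : ℕ) (c : Fin n → C) (f : ∀ i, d ⟶ Φ.obj (c i)),
    ∀ (c' : C) (g : d ⟶ Φ.obj c'), ∃ (i : Fin n) (h : c i ⟶ c'), g = f i ≫ Φ.map h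

/-- (G1): an admissible order on the morphisms out of `c`, i.e. a family of well-orders on
the hom-sets `c ⟶ c'` compatible with postcomposition. -/
def HasAdmissibleOrder {C : Type*} [Category C] (c : C) : Prop :=
  ∃ r : ∀ c' : C, (c ⟶ c') → (c ⟶ c') → Prop,
    (∀ c' : C, IsWellOrder (c ⟶ c') (r c')) ∧
    ∀ (c' c'' : C) (f f' : c ⟶ c') (g : c' ⟶ c''), r c' f f' → r c'' (f ≫ g) (f' ≫ g)

/-- (G2): for every object `c` the poset `|c/C|` is Noetherian. -/
def PropertyG2 (C : Type*) [Category C] : Prop :=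
  ∀ (c : C) (x : ℕ → Σ c' : C, (c ⟶ c')),
    ∃ i j : ℕ, i < j ∧ ∃ h : (x i).1 ⟶ (x j).1, (x i).2 ≫ h = (x j).2

/-- A category is Gröbner if it satisfies (G1) and (G2). -/
def Grobner (C : Type*) [Category C] : Prop :=
  (∀ c : C, HasAdmissibleOrder c) ∧ PropertyG2 C

/-- A category is quasi-Gröbner if it admits an essentially surjective functor satisfying
property (F) from a Gröbner category. -/
def QuasiGrobner (D : Type*) [Category D] : Prop :=
  ∃ (A : Cat.{w₁, w₂}) (Φ : A ⥤ D), Φ.EssSurj ∧ PropertyF Φ ∧ Grobner A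

/-! ### Auxiliary lemmas -/

section Aux

lemma exists_infinite_fiber_nat {n : ℕ} (f : ℕ → Fin n) :
    ∃ i : Fin n, {m : ℕ | f m = i}.Infinite := by
  by_contra h
  push_neg at h
  have huniv : (Set.univ : Set ℕ) = ⋃ i : Fin n, {m : ℕ | f m = i} := by
    ext m
    simp
  exact Set.infinite_univ (α := ℕ) (by rw [huniv]; exact Set.finite_iUnion h)

lemma exists_finite_weakly_initial {α : Type*} (r : α → α → Prop)
    (h : ∀ x : ℕ → α, ∃ i j : ℕ, i < j ∧ r (x i) (x j)) :
    ∃ (n : ℕ) (y : Fin n → α), ∀ a : α, ∃ i, r (y i) a := by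
  by_contra hc
  push_neg at hc
  obtain ⟨f, -, hf⟩ := exists_seq_of_forall_finset_exists (fun _ : α => True)
    (fun x y => ¬ r x y) (fun s _ => by
      obtain ⟨a, ha⟩ := hc s.card (fun i => (s.equivFin.symm i : α))
      refine ⟨a, trivial, fun x hx => ?_⟩
      simpa using ha (s.equivFin ⟨x, hx⟩))
  obtain ⟨i, j, hij, hr⟩ := h f
  exact hf i j hij hr

lemma propertyF_of_seq {C : Type*} [Category C] {D : Type*} [Category D] (Φ : C ⥤ D)
    (h : ∀ (d : D) (x : ℕ → Σ c : C, (d ⟶ Φ.obj c)),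
      ∃ i j : ℕ, i < j ∧ ∃ h' : (x i).1 ⟶ (x j).1, (x i).2 ≫ Φ.map h' = (x j).2) :
    PropertyF Φ := by
  intro d
  obtain ⟨n, y, hy⟩ := exists_finite_weakly_initial
    (fun p q : Σ c : C, (d ⟶ Φ.obj c) => ∃ h' : p.1 ⟶ q.1, p.2 ≫ Φ.map h' = q.2) (h d)
  refine ⟨n, fun i => (y i).1, fun i => (y i).2, fun c' g => ?_⟩
  obtain ⟨i, h', e⟩ := hy ⟨c', g⟩
  exact ⟨i, h', e.symm⟩

lemma grobner_fullSubcategory {A : Type*} [Category A] (Z : A → Prop) (h : Grobner A) :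
    Grobner (ObjectProperty.FullSubcategory Z) := by
  constructor
  · intro c
    obtain ⟨r, hwo, hcomp⟩ := h.1 c.obj
    exact ⟨fun c' f f' => r c'.obj f.hom f'.hom, fun c' => by
        haveI := hwo c'.obj
        exact Function.Injective.isWellOrder (r c'.obj) (f := fun g : c ⟶ c' => g.hom)
          (fun g g' h => by ext; exact h),
      fun c' c'' f f' g hr => hcomp c'.obj c''.obj f.hom f'.hom g.hom hr⟩
  · intro c x
    obtain ⟨i, j, hij, k, e⟩ := h.2 c.obj (fun n => ⟨(x n).1.obj, (x n).2.hom⟩)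
    exact ⟨i, j, hij, ObjectProperty.homMk k, by ext; exact e⟩

lemma grobner_sum {A : Type w₂} {B : Type w₂} [Category.{w₁} A] [Category.{w₁} B]
    (hA : Grobner A) (hB : Grobner B) : Grobner (A ⊕ B) := by
  constructor
  · rintro (a | b)
    · obtain ⟨r, hwo, hcomp⟩ := hA.1 a
      refine ⟨fun Y => match Y with
        | Sum.inl a' => fun f f' => r a' f.down f'.down
        | Sum.inr _ => fun _ _ => False, ?_, ?_⟩
      · rintro (a' | b')
        · haveI := hwo a'; exact Function.Injective.isWellOrder (r a') (f := ULift.down) ULift.down_injective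
        · exact { trichotomous := fun f => (hom_inl_inr_false A B f).elim,
                  toIsWellFounded := ⟨⟨fun f => (hom_inl_inr_false A B f).elim⟩⟩ }
      · rintro (a' | b') (a'' | b'') f f' g hr
        · exact hcomp a' a'' f.down f'.down g.down hr
        · exact (hom_inl_inr_false A B g).elim
        · exact (hom_inl_inr_false A B f).elim
        · exact (hom_inl_inr_false A B f).elim
    · obtain ⟨r, hwo, hcomp⟩ := hB.1 b
      refine ⟨fun Y => match Y with
        | Sum.inl _ => fun _ _ => False
        | Sum.inr b' => fun f f' => r b' f.down f'.down, ?_, ?_⟩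
      · rintro (a' | b')
        · exact { trichotomous := fun f => (hom_inr_inl_false B A f).elim,
                  toIsWellFounded := ⟨⟨fun f => (hom_inr_inl_false B A f).elim⟩⟩ }
        · haveI := hwo b'; exact Function.Injective.isWellOrder (r b') (f := ULift.down) ULift.down_injective
      · rintro (a' | b') (a'' | b'') f f' g hr
        · exact (hom_inr_inl_false B A f).elim
        · exact (hom_inr_inl_false B A f).elim
        · exact (hom_inr_inl_false B A g).elim
        · exact hcomp b' b'' f.down f'.down g.down hr
  · rintro (a | b) x
    · have key : ∀ n : ℕ, ∃ (a' : A) (g : a ⟶ a'),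
          x n = ⟨Sum.inl a', ULift.up g⟩ := by
        intro n
        rcases hxy : x n with ⟨Y, f⟩
        cases Y with
        | inl a' => exact ⟨a', f.down, rfl⟩
        | inr b' => exact (hom_inl_inr_false A B f).elim
      choose a' g hx using key
      obtain ⟨i, j, hij, k, e⟩ := hA.2 a (fun n => ⟨a' n, g n⟩)
      refine ⟨i, j, hij, ?_⟩
      rw [hx i, hx j]
      exact ⟨ULift.up k, congrArg ULift.up e⟩
    · have key : ∀ n : ℕ, ∃ (b' : B) (g : b ⟶ b'),
          x n = ⟨Sum.inr b', ULift.up g⟩ := by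
        intro n
        rcases hxy : x n with ⟨Y, f⟩
        cases Y with
        | inl a' => exact (hom_inr_inl_false B A f).elim
        | inr b' => exact ⟨b', f.down, rfl⟩
      choose b' g hx using key
      obtain ⟨i, j, hij, k, e⟩ := hB.2 b (fun n => ⟨b' n, g n⟩)
      refine ⟨i, j, hij, ?_⟩
      rw [hx i, hx j]
      exact ⟨ULift.up k, congrArg ULift.up e⟩

/-- Sum of two functors into a common target, with unrestricted universes. -/
def sumFunctor {A : Type w₂} [Category.{w₁} A] {B : Type w₂} [Category.{w₁} B]
    {E : Type*} [Category E] (F : A ⥤ E) (G : B ⥤ E) : A ⊕ B ⥤ E where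
  obj X := match X with
    | Sum.inl a => F.obj a
    | Sum.inr b => G.obj b
  map {X Y} f := match X, Y, f with
    | Sum.inl _, Sum.inl _, f => F.map f.down
    | Sum.inr _, Sum.inr _, f => G.map f.down
  map_id X := match X with
    | Sum.inl a => F.map_id a
    | Sum.inr b => G.map_id b
  map_comp {X Y Z} f g := match X, Y, Z, f, g with
    | Sum.inl _, Sum.inl _, Sum.inl _, f, g => F.map_comp f.down g.down
    | Sum.inr _, Sum.inr _, Sum.inr _, f, g => G.map_comp f.down g.down

end Aux

/-! ### The construction -/

section Construction

variable {C : Type*} [Category C] (Q : C → Prop)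

/-- The closure of a predicate under isomorphisms. -/
def IsoClosure : C → Prop := fun c => ∃ c₀ : C, Q c₀ ∧ Nonempty (c₀ ≅ c)

noncomputable def qcObj (x : ObjectProperty.FullSubcategory (IsoClosure Q)) : C := x.property.choose

lemma qcObj_prop (x : ObjectProperty.FullSubcategory (IsoClosure Q)) : Q (qcObj Q x) :=
  x.property.choose_spec.1

noncomputable def qcIso (x : ObjectProperty.FullSubcategory (IsoClosure Q)) : qcObj Q x ≅ x.obj :=
  x.property.choose_spec.2.some

/-- The functor choosing a `Q`-representative of each object in the iso-closure of `Q`. -/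
noncomputable def chooseRep : ObjectProperty.FullSubcategory (IsoClosure Q) ⥤ ObjectProperty.FullSubcategory Q where
  obj x := ⟨qcObj Q x, qcObj_prop Q x⟩
  map {x y} f := ObjectProperty.homMk
    ((qcIso Q x).hom ≫ f.hom ≫ (qcIso Q y).inv)
  map_id x := by
    ext
    simp
  map_comp {x y z} f g := by
    ext
    simp

variable (P : C → Prop)
variable {A : Type w₂} [Category.{w₁} A] (Φ : A ⥤ ObjectProperty.FullSubcategory (fun c : C => ¬ P c))

/-- Predicate on `A`: the image lands (up to iso) in `Q`. -/
def BPred : A → Prop := fun a => IsoClosure Q ((Φ.obj a).obj)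

noncomputable def toIsoClosure :
    ObjectProperty.FullSubcategory (BPred Q P Φ) ⥤ ObjectProperty.FullSubcategory (IsoClosure Q) where
  obj b := ⟨(Φ.obj b.obj).obj, b.property⟩
  map {b b'} f := ObjectProperty.homMk (Φ.map f.hom).hom
  map_id b := by
    ext
    simp
  map_comp {b b' b''} f g := by
    ext
    simp

end Construction

/-- Suppose the category `C` is the disjoint union of the two full subcategories `C₀` (on
objects satisfying `P`) and `C'` (on objects not satisfying `P`), with no morphisms between
them, and suppose there is a full functor, surjective on objects, from a full subcategory
`C₁` of `C'` (on objects satisfying `Q`) to `C₀`. If `C'` is quasi-Gröbner, then `C` is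
quasi-Gröbner. -/
theorem quasiGrobner_of_disjoint_union {C : Type*} [Category C] (P Q : C → Prop)
    (hdisj : ∀ (c c' : C), (c ⟶ c') → (P c ↔ P c'))
    (hQ : ∀ c : C, Q c → ¬ P c)
    (F : ObjectProperty.FullSubcategory Q ⥤ ObjectProperty.FullSubcategory P)
    (hfull : F.Full) (hsurj : Function.Surjective F.obj)
    (hC' : QuasiGrobner.{w₁, w₂} (ObjectProperty.FullSubcategory (fun c : C => ¬ P c))) :
    QuasiGrobner.{w₁, w₂} C := by
  classical
  obtain ⟨A, Φ, hES, hF, hG⟩ := hC'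
  haveI := hES
  let B := ObjectProperty.FullSubcategory (BPred Q P Φ)
  let R : B ⥤ C := toIsoClosure Q P Φ ⋙ chooseRep Q ⋙ F ⋙ ObjectProperty.ι P
  let L : (A : Type w₂) ⥤ C := Φ ⋙ ObjectProperty.ι _
  let Ψ : ((A : Type w₂) ⊕ B) ⥤ C := sumFunctor L R
  refine ⟨Cat.of ((A : Type w₂) ⊕ B), Ψ, ?_, ?_,
    grobner_sum hG (grobner_fullSubcategory _ hG)⟩
  · -- essential surjectivity
    constructor
    intro Y
    by_cases hPY : P Y
    · obtain ⟨c₁, hc₁⟩ := hsurj ⟨Y, hPY⟩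
      let c₁' : ObjectProperty.FullSubcategory (fun c : C => ¬ P c) := ⟨c₁.obj, hQ _ c₁.property⟩
      let a := Φ.objPreimage c₁'
      let e : Φ.obj a ≅ c₁' := Φ.objObjPreimageIso c₁'
      let e' : (Φ.obj a).obj ≅ c₁.obj := (ObjectProperty.ι _).mapIso e
      have hb : BPred Q P Φ a := ⟨c₁.obj, c₁.property, ⟨e'.symm⟩⟩
      let b : B := ⟨a, hb⟩
      refine ⟨Sum.inr b, ⟨?_⟩⟩
      let z := (toIsoClosure Q P Φ).obj b
      let i1 : qcObj Q z ≅ c₁.obj := (qcIso Q z) ≪≫ e'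
      let i2 : (chooseRep Q).obj z ≅ c₁ := (ObjectProperty.ι Q).preimageIso i1
      exact (ObjectProperty.ι P).mapIso (F.mapIso i2 ≪≫ eqToIso hc₁)
    · let Y' : ObjectProperty.FullSubcategory (fun c : C => ¬ P c) := ⟨Y, hPY⟩
      exact ⟨Sum.inl (Φ.objPreimage Y'),
        ⟨(ObjectProperty.ι _).mapIso (Φ.objObjPreimageIso Y')⟩⟩
  · -- property F
    apply propertyF_of_seq
    intro d x
    by_cases hPd : P d
    · -- `d` lies in `C₀`
      obtain ⟨c₁, hc₁⟩ := hsurj ⟨d, hPd⟩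
      have key : ∀ n : ℕ, ∃ (b : B) (f : d ⟶ Ψ.obj (Sum.inr b)), x n = ⟨Sum.inr b, f⟩ := by
        intro n
        rcases hxy : x n with ⟨X, f⟩
        cases X with
        | inl a =>
          exact absurd ((hdisj d _ f).1 hPd) (Φ.obj a).property
        | inr b => exact ⟨b, f, rfl⟩
      choose b f hx using key
      let z : ℕ → ObjectProperty.FullSubcategory (IsoClosure Q) := fun n => (toIsoClosure Q P Φ).obj (b n)
      let w : ℕ → ObjectProperty.FullSubcategory Q := fun n => (chooseRep Q).obj (z n)
      let d₀ : ObjectProperty.FullSubcategory P := ⟨d, hPd⟩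
      have hfn : ∀ n, ∃ g' : c₁ ⟶ w n,
          F.map g' = eqToHom hc₁ ≫ (ObjectProperty.homMk (f n) : d₀ ⟶ F.obj (w n)) :=
        fun n => hfull.map_surjective _
      choose g' hg' using hfn
      let c₁' : ObjectProperty.FullSubcategory (fun c : C => ¬ P c) := ⟨c₁.obj, hQ _ c₁.property⟩
      obtain ⟨m, cs, fs, hcov⟩ := hF c₁'
      let u : ∀ n, (c₁' ⟶ Φ.obj ((b n).obj)) := fun n =>
        ObjectProperty.homMk ((g' n).hom ≫ (qcIso Q (z n)).hom)
      have key2 : ∀ n, ∃ (i : Fin m) (k : cs i ⟶ (b n).obj),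
          u n = fs i ≫ Φ.map k :=
        fun n => hcov _ (u n)
      choose idx k hk using key2
      obtain ⟨i₀, hinf⟩ := exists_infinite_fiber_nat idx
      set p : ℕ → Prop := fun n => idx n = i₀ with hp
      have key3 : ∀ n, idx n = i₀ → ∃ k' : cs i₀ ⟶ (b n).obj,
          u n = fs i₀ ≫ Φ.map k' := by
        intro n hn
        rw [← hn]
        exact ⟨k n, hk n⟩
      have hmem : ∀ t : ℕ, idx (Nat.nth p t) = i₀ := fun t => Nat.nth_mem_of_infinite hinf t
      choose k' hk' using fun t => key3 (Nat.nth p t) (hmem t)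
      obtain ⟨t, t', htt', l, hl⟩ := hG.2 (cs i₀) (fun t => ⟨(b (Nat.nth p t)).obj, k' t⟩)
      refine ⟨Nat.nth p t, Nat.nth p t', (Nat.nth_lt_nth hinf).2 htt', ?_⟩
      rw [hx (Nat.nth p t), hx (Nat.nth p t')]
      set n1 := Nat.nth p t with hn1
      set n2 := Nat.nth p t' with hn2
      let l' : b n1 ⟶ b n2 := ObjectProperty.homMk l
      refine ⟨show Sum.inr (b n1) ⟶ Sum.inr (b n2) from ULift.up l', ?_⟩
      -- the underlying computation
      have step1' : u n1 ≫ Φ.map l = u n2 := by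
        rw [hk' t, hk' t', Category.assoc, ← Φ.map_comp, hl]
      have step1C : ((show c₁.obj ⟶ qcObj Q (z n1) from (g' n1).hom) ≫ (qcIso Q (z n1)).hom)
            ≫ (Φ.map l).hom
          = (show c₁.obj ⟶ qcObj Q (z n2) from (g' n2).hom) ≫ (qcIso Q (z n2)).hom := by
        exact congrArg InducedCategory.Hom.hom step1'
      have step1Q : g' n1 ≫ ((chooseRep Q).map ((toIsoClosure Q P Φ).map l')) = g' n2 := by
        ext
        show (show c₁.obj ⟶ qcObj Q (z n1) from (g' n1).hom)
            ≫ ((qcIso Q (z n1)).hom ≫ (Φ.map l).hom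
              ≫ (qcIso Q (z n2)).inv)
          = (show c₁.obj ⟶ qcObj Q (z n2) from (g' n2).hom)
        erw [← Category.assoc, ← Category.assoc, step1C, Category.assoc,
          Iso.hom_inv_id, Category.comp_id]
      have step2 : F.map (g' n1) ≫ F.map ((chooseRep Q).map ((toIsoClosure Q P Φ).map l'))
          = F.map (g' n2) := by
        rw [← F.map_comp, step1Q]
      rw [hg' n1, hg' n2, Category.assoc] at step2
      have final : (ObjectProperty.homMk (f n1) : d₀ ⟶ F.obj (w n1))
            ≫ F.map ((chooseRep Q).map ((toIsoClosure Q P Φ).map l'))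
          = (ObjectProperty.homMk (f n2) : d₀ ⟶ F.obj (w n2)) := by
        have := (cancel_epi (eqToHom hc₁ : F.obj c₁ ⟶ d₀)).1 step2
        exact this
      exact congrArg InducedCategory.Hom.hom final
    · -- `d` lies in `C'`
      let d' : ObjectProperty.FullSubcategory (fun c : C => ¬ P c) := ⟨d, hPd⟩
      have key : ∀ n : ℕ, ∃ (a : A) (f : d ⟶ Ψ.obj (Sum.inl a)), x n = ⟨Sum.inl a, f⟩ := by
        intro n
        rcases hxy : x n with ⟨X, f⟩
        cases X with
        | inl a => exact ⟨a, f, rfl⟩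
        | inr b =>
          exact absurd ((hdisj d _ f).2
            (F.obj ((chooseRep Q).obj ((toIsoClosure Q P Φ).obj b))).property) hPd
      choose a f hx using key
      obtain ⟨m, cs, fs, hcov⟩ := hF d'
      let u : ∀ n, (d' ⟶ Φ.obj (a n)) := fun n => ObjectProperty.homMk (f n)
      have key2 : ∀ n, ∃ (i : Fin m) (k : cs i ⟶ a n),
          u n = fs i ≫ Φ.map k := fun n => hcov _ (u n)
      choose idx k hk using key2
      obtain ⟨i₀, hinf⟩ := exists_infinite_fiber_nat idx
      set p : ℕ → Prop := fun n => idx n = i₀ with hp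
      have key3 : ∀ n, idx n = i₀ → ∃ k' : cs i₀ ⟶ a n,
          u n = fs i₀ ≫ Φ.map k' := by
        intro n hn
        rw [← hn]
        exact ⟨k n, hk n⟩
      have hmem : ∀ t : ℕ, idx (Nat.nth p t) = i₀ := fun t => Nat.nth_mem_of_infinite hinf t
      choose k' hk' using fun t => key3 (Nat.nth p t) (hmem t)
      obtain ⟨t, t', htt', l, hl⟩ := hG.2 (cs i₀) (fun t => ⟨a (Nat.nth p t), k' t⟩)
      refine ⟨Nat.nth p t, Nat.nth p t', (Nat.nth_lt_nth hinf).2 htt', ?_⟩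
      rw [hx (Nat.nth p t), hx (Nat.nth p t')]
      set n1 := Nat.nth p t with hn1
      set n2 := Nat.nth p t' with hn2
      refine ⟨show Sum.inl (a n1) ⟶ Sum.inl (a n2) from ULift.up l, ?_⟩
      have main : u n1 ≫ Φ.map l = u n2 := by
        rw [hk' t, hk' t', Category.assoc, ← Φ.map_comp, hl]
      exact congrArg InducedCategory.Hom.hom main
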